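/- Let t ≥ 27, k ∈ {t-1,t}, and let s ≥ t+k+1 satisfy s ≡ t+k+1 (mod 2). Then 2c(s,t,k) ≥ s+4; moreover if s ≥ t+k+3 then 2c(s,t,k) ≥ s+6. -/
import Mathlib
set_option maxHeartbeats 1000000


def bin3 (n : ℤ) : ℤ := n*(n-1)*(n-2)/6
def dtk (t k : ℤ) : ℤ := t*(t+1)/2 + k*(k+1)/2
def gtk (t k : ℤ) : ℤ := 2 + t*(t+1)*(2*t-5)/6 + k*(k+1)*(2*k-5)/6
def cc (s t k : ℤ) : ℤ := Int.fdiv (bin3 (s+3) - s * dtk t k - 6 - 3*(s-t-k-1)/2 + gtk t k) (s-1)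
def dd (s t k : ℤ) : ℤ := bin3 (s+3) - s * dtk t k - 6 - 3*(s-t-k-1)/2 + gtk t k - (s-1) * cc s t k
def gg (s t k : ℤ) : ℤ := cc s t k - 3 - 3*(s-t-k-1)/2

lemma dvd6_bin (n : ℤ) : (6:ℤ) ∣ n*(n-1)*(n-2) := by
  have h : ∀ a : ZMod 6, a*(a-1)*(a-2) = 0 := by decide
  have h2 : ((n*(n-1)*(n-2) : ℤ) : ZMod 6) = 0 := by push_cast; exact h _
  exact (ZMod.intCast_zmod_eq_zero_iff_dvd _ 6).mp h2

lemma dvd6_g (n : ℤ) : (6:ℤ) ∣ n*(n+1)*(2*n-5) := by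
  have h : ∀ a : ZMod 6, a*(a+1)*(2*a-5) = 0 := by decide
  have h2 : ((n*(n+1)*(2*n-5) : ℤ) : ZMod 6) = 0 := by push_cast; exact h _
  exact (ZMod.intCast_zmod_eq_zero_iff_dvd _ 6).mp h2

lemma dvd2_d (n : ℤ) : (2:ℤ) ∣ n*(n+1) := (Int.even_mul_succ_self n).two_dvd

lemma bin3_mul (n : ℤ) : bin3 n * 6 = n*(n-1)*(n-2) :=
  Int.ediv_mul_cancel (dvd6_bin n)

lemma dtk_mul (n : ℤ) : n*(n+1)/2*2 = n*(n+1) := Int.ediv_mul_cancel (dvd2_d n)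

lemma gtk_mul (n : ℤ) : n*(n+1)*(2*n-5)/6*6 = n*(n+1)*(2*n-5) :=
  Int.ediv_mul_cancel (dvd6_g n)

lemma cc_lb (s t k b : ℤ) (hs1 : 1 < s)
    (h : b * (s-1) ≤ bin3 (s+3) - s * dtk t k - 6 - 3*(s-t-k-1)/2 + gtk t k) :
    b ≤ cc s t k := by
  unfold cc
  rw [Int.fdiv_eq_ediv_of_nonneg _ (by linarith : (0:ℤ) ≤ s - 1)]
  exact (Int.le_ediv_iff_mul_le (by linarith)).mpr h

theorem stmt10 (t k s : ℤ) (ht : 27 ≤ t) (hk : k = t - 1 ∨ k = t)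
    (hs : t + k + 1 ≤ s) (hpar : (2:ℤ) ∣ (s - (t+k+1))) :
    s + 4 ≤ 2 * cc s t k ∧ (t + k + 3 ≤ s → s + 6 ≤ 2 * cc s t k) := by
  obtain ⟨m, hm⟩ := hpar
  have hm0 : 0 ≤ m := by omega
  rcases hk with rfl | hk
  · have hseq : s = 2*t+2*m := by omega
    subst hseq
    have hA := bin3_mul (2*t+2*m+3)
    have hd2 := dtk_mul (t-1)
    have hg2 := gtk_mul (t-1)
    have hd2' : (2*t+2*m) * ((t-1)*(t-1+1)/2) * 2 = (2*t+2*m) * ((t-1)*(t-1+1)) := by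
      rw [mul_assoc, hd2]
    have hd1 := dtk_mul t
    have hg1 := gtk_mul t
    have hd1' : (2*t+2*m) * (t*(t+1)/2) * 2 = (2*t+2*m) * (t*(t+1)) := by
      rw [mul_assoc, hd1]
    have h3 : 3*(2*t+2*m-t-(t-1)-1)/2*2 = 3*(2*t+2*m-t-(t-1)-1) := by
      refine Int.ediv_mul_cancel ⟨3*m, by ring⟩
    have hs1 : (1:ℤ) < 2*t+2*m := by linarith
    constructor
    · have hval : 6*((bin3 (2*t+2*m+3) - (2*t+2*m) * dtk t (t-1) - 6
          - 3*(2*t+2*m-t-(t-1)-1)/2 + gtk t (t-1)) - (t+m+2) * (2*t+2*m-1)) = 12*t^2*m + 24*t*m^2 + 24*t*m + 6*t + 8*m^3 + 12*m^2 - 14*m - 6 := by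
        unfold dtk gtk
        linear_combination hA - 3*hd1' - 3*hd2' + hg2 + hg1 - 3*h3
      have hpos : (0:ℤ) ≤ 12*t^2*m + 24*t*m^2 + 24*t*m + 6*t + 8*m^3 + 12*m^2 - 14*m - 6 := by
        nlinarith [mul_nonneg (mul_nonneg (by linarith : (0:ℤ) ≤ t) hm0) hm0,
          mul_nonneg (mul_nonneg (by linarith : (0:ℤ) ≤ t) (by linarith : (0:ℤ) ≤ t)) hm0,
          mul_nonneg (mul_nonneg hm0 hm0) hm0, mul_nonneg hm0 hm0,
          mul_le_mul_of_nonneg_right (by linarith : (27:ℤ) ≤ t) hm0]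
      have := cc_lb (2*t+2*m) t (t-1) (t+m+2) hs1 (by linarith)
      linarith
    · intro hs3
      have hm1 : 1 ≤ m := by omega
      have hval : 6*((bin3 (2*t+2*m+3) - (2*t+2*m) * dtk t (t-1) - 6
          - 3*(2*t+2*m-t-(t-1)-1)/2 + gtk t (t-1)) - (t+m+3) * (2*t+2*m-1)) = 12*t^2*m + 24*t*m^2 + 24*t*m - 6*t + 8*m^3 + 12*m^2 - 26*m := by
        unfold dtk gtk
        linear_combination hA - 3*hd1' - 3*hd2' + hg2 + hg1 - 3*h3
      have hpos : (0:ℤ) ≤ 12*t^2*m + 24*t*m^2 + 24*t*m - 6*t + 8*m^3 + 12*m^2 - 26*m := by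
        nlinarith [mul_nonneg (mul_nonneg (by linarith : (0:ℤ) ≤ t) hm0) hm0,
          mul_nonneg (mul_nonneg (by linarith : (0:ℤ) ≤ t) (by linarith : (0:ℤ) ≤ t)) hm0,
          mul_nonneg (mul_nonneg hm0 hm0) hm0, mul_nonneg hm0 hm0,
          mul_le_mul_of_nonneg_right (by linarith : (27:ℤ) ≤ t) hm0,
          mul_le_mul_of_nonneg_left hm1 (by linarith : (0:ℤ) ≤ t)]
      have := cc_lb (2*t+2*m) t (t-1) (t+m+3) hs1 (by linarith)
      linarith
  · have hk2 : t = k := hk.symm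
    subst hk2
    have hseq : s = 2*t+1+2*m := by omega
    subst hseq
    have hA := bin3_mul (2*t+1+2*m+3)
    have hd1 := dtk_mul t
    have hg1 := gtk_mul t
    have hd1' : (2*t+1+2*m) * (t*(t+1)/2) * 2 = (2*t+1+2*m) * (t*(t+1)) := by
      rw [mul_assoc, hd1]
    have h3 : 3*(2*t+1+2*m-t-(t)-1)/2*2 = 3*(2*t+1+2*m-t-(t)-1) := by
      refine Int.ediv_mul_cancel ⟨3*m, by ring⟩
    have hs1 : (1:ℤ) < 2*t+1+2*m := by linarith
    constructor
    · have hval : 6*((bin3 (2*t+1+2*m+3) - (2*t+1+2*m) * dtk t (t) - 6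
          - 3*(2*t+1+2*m-t-(t)-1)/2 + gtk t (t)) - (t+m+3) * (2*t+1+2*m-1)) = 12*t^2*m + 24*t*m^2 + 36*t*m + 8*m^3 + 24*m^2 - 2*m := by
        unfold dtk gtk
        linear_combination hA - 6*hd1' + 2*hg1 - 3*h3
      have hpos : (0:ℤ) ≤ 12*t^2*m + 24*t*m^2 + 36*t*m + 8*m^3 + 24*m^2 - 2*m := by
        nlinarith [mul_nonneg (mul_nonneg (by linarith : (0:ℤ) ≤ t) hm0) hm0,
          mul_nonneg (mul_nonneg (by linarith : (0:ℤ) ≤ t) (by linarith : (0:ℤ) ≤ t)) hm0,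
          mul_nonneg (mul_nonneg hm0 hm0) hm0, mul_nonneg hm0 hm0,
          mul_le_mul_of_nonneg_right (by linarith : (27:ℤ) ≤ t) hm0]
      have := cc_lb (2*t+1+2*m) t (t) (t+m+3) hs1 (by linarith)
      linarith
    · intro hs3
      have hm1 : 1 ≤ m := by omega
      have hval : 6*((bin3 (2*t+1+2*m+3) - (2*t+1+2*m) * dtk t (t) - 6
          - 3*(2*t+1+2*m-t-(t)-1)/2 + gtk t (t)) - (t+m+4) * (2*t+1+2*m-1)) = 12*t^2*m + 24*t*m^2 + 36*t*m - 12*t + 8*m^3 + 24*m^2 - 14*m := by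
        unfold dtk gtk
        linear_combination hA - 6*hd1' + 2*hg1 - 3*h3
      have hpos : (0:ℤ) ≤ 12*t^2*m + 24*t*m^2 + 36*t*m - 12*t + 8*m^3 + 24*m^2 - 14*m := by
        nlinarith [mul_nonneg (mul_nonneg (by linarith : (0:ℤ) ≤ t) hm0) hm0,
          mul_nonneg (mul_nonneg (by linarith : (0:ℤ) ≤ t) (by linarith : (0:ℤ) ≤ t)) hm0,
          mul_nonneg (mul_nonneg hm0 hm0) hm0, mul_nonneg hm0 hm0,
          mul_le_mul_of_nonneg_right (by linarith : (27:ℤ) ≤ t) hm0,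
          mul_le_mul_of_nonneg_left hm1 (by linarith : (0:ℤ) ≤ t)]
      have := cc_lb (2*t+1+2*m) t (t) (t+m+4) hs1 (by linarith)
      linarith
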